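/- Let (u, v, pu, pv) solve the FLRW null geodesic system with L = 0 on an interval [1,S), maximal subject to the constraints r > 0 and v+u > 0, with t(1) = 1, pv(1) = 0, p := pu(1) > 0 and R₀ := r(1) > 0. Then pv ≡ 0 on [1,S), t(s) = (1 + (3/2)·p·(s−1))^{2/3} and r(s) = R₀ − ∫₁ˢ p·(1 + (3/2)·p·(s'−1))^{−2/3} ds' for all s ∈ [1,S); moreover S < ∞ and r(s) → 0 as s → S (the radial ingoing null geodesic reaches the centre of symmetry in finite parameter time). -/

import Mathlib

/-- The time coordinate `t = (v+u)²/4` along a curve in double null coordinates. -/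
noncomputable def tOf (u v : ℝ → ℝ) (s : ℝ) : ℝ := (v s + u s) ^ 2 / 4

/-- The radial coordinate `r = v − u` along a curve in double null coordinates. -/
noncomputable def rOf (u v : ℝ → ℝ) (s : ℝ) : ℝ := v s - u s

/-- **The FLRW null geodesic system** with angular momentum `L` on a set `I ⊆ ℝ`:
`u' = pu`, `v' = pv`,
`pu' = −t^{−1/2}·pu² − (1/2)(1/(2t^{1/2}) + 1/r)·L²/(t²r²)`,
`pv' = −t^{−1/2}·pv² − (1/2)(1/(2t^{1/2}) − 1/r)·L²/(t²r²)`,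
where `t = (v+u)²/4` and `r = v−u` are required to satisfy `v+u > 0`, `r > 0` on `I`,
and `pu ≥ 0`, `pv ≥ 0` on `I`. -/
def FLRWGeodesicSystem (I : Set ℝ) (L : ℝ) (u v pu pv : ℝ → ℝ) : Prop :=
  (∀ s ∈ I, 0 < v s + u s) ∧
  (∀ s ∈ I, 0 < rOf u v s) ∧
  (∀ s ∈ I, 0 ≤ pu s) ∧
  (∀ s ∈ I, 0 ≤ pv s) ∧
  (∀ s ∈ I, HasDerivAt u (pu s) s) ∧
  (∀ s ∈ I, HasDerivAt v (pv s) s) ∧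
  (∀ s ∈ I, HasDerivAt pu
    (-(pu s) ^ 2 / Real.sqrt (tOf u v s)
      - 1 / 2 * (1 / (2 * Real.sqrt (tOf u v s)) + 1 / rOf u v s) * L ^ 2
          / ((tOf u v s) ^ 2 * (rOf u v s) ^ 2)) s) ∧
  (∀ s ∈ I, HasDerivAt pv
    (-(pv s) ^ 2 / Real.sqrt (tOf u v s)
      - 1 / 2 * (1 / (2 * Real.sqrt (tOf u v s)) - 1 / rOf u v s) * L ^ 2
          / ((tOf u v s) ^ 2 * (rOf u v s) ^ 2)) s)

open Topology Filter

/-- The half-open interval `[a, S)` of real numbers, with possibly infinite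
right endpoint `S : EReal`. -/
def IcoE (a : ℝ) (S : EReal) : Set ℝ := {s : ℝ | a ≤ s ∧ (s : EReal) < S}

/-! ### Auxiliary lemmas -/

lemma IcoE_icc_subset {S : EReal} {a b : ℝ} (ha : a ∈ IcoE 1 S) (hb : b ∈ IcoE 1 S) :
    Set.Icc a b ⊆ IcoE 1 S := fun x hx =>
  ⟨ha.1.trans hx.1, lt_of_le_of_lt (EReal.coe_le_coe_iff.mpr hx.2) hb.2⟩

lemma const_of_deriv_zero {I : Set ℝ} (hI : ∀ a ∈ I, ∀ b ∈ I, Set.Icc a b ⊆ I)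
    {f : ℝ → ℝ} (hf : ∀ x ∈ I, HasDerivAt f 0 x)
    {a s : ℝ} (ha : a ∈ I) (hs : s ∈ I) (has : a ≤ s) : f s = f a := by
  have hsub := hI a ha s hs
  exact constant_of_has_deriv_right_zero
    (fun x hx => (hf x (hsub hx)).continuousAt.continuousWithinAt)
    (fun x hx => (hf x (hsub ⟨hx.1, hx.2.le⟩)).hasDerivWithinAt)
    s (Set.right_mem_Icc.mpr has)

lemma cube_rpow_third {x : ℝ} (hx : 0 ≤ x) : (x ^ 3) ^ ((1:ℝ)/3) = x := by
  rw [← Real.rpow_natCast x 3, ← Real.rpow_mul hx]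
  norm_num

lemma rpow_third_sq {x : ℝ} (hx : 0 ≤ x) : (x ^ ((1:ℝ)/3)) ^ 2 = x ^ ((2:ℝ)/3) := by
  rw [← Real.rpow_natCast (x ^ ((1:ℝ)/3)) 2, ← Real.rpow_mul hx]
  norm_num

/-- The blow-up parameter time for the explicit ingoing radial solution. -/
noncomputable def sStar (p R₀ : ℝ) : ℝ := 1 + (((R₀ + 2)/2) ^ 3 - 1) / (3/2*p)

lemma one_lt_sStar {p R₀ : ℝ} (hp : 0 < p) (hR₀ : 0 < R₀) : 1 < sStar p R₀ := by
  have hc : (1:ℝ) < (R₀ + 2)/2 := by linarith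
  have h : (1:ℝ) < ((R₀ + 2)/2) ^ 3 := one_lt_pow₀ hc (by norm_num)
  have : 0 < (((R₀ + 2)/2) ^ 3 - 1) / (3/2*p) := div_pos (by linarith) (by positivity)
  unfold sStar; linarith

lemma q_sStar {p R₀ : ℝ} (hp : 0 < p) :
    1 + 3/2*p*(sStar p R₀ - 1) = ((R₀ + 2)/2) ^ 3 := by
  unfold sStar
  field_simp
  ring

lemma hasDerivAt_q (p s : ℝ) :
    HasDerivAt (fun x : ℝ => 1 + 3/2*p*(x - 1)) (3/2*p) s := by
  simpa using ((((hasDerivAt_id s).sub_const 1).const_mul (3/2*p)).const_add 1)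

/-- The explicit ingoing radial null geodesic solves the system on `[1, sStar p R₀)`. -/
lemma explicit_system (p R₀ : ℝ) (hp : 0 < p) (hR₀ : 0 < R₀) :
    FLRWGeodesicSystem (IcoE 1 ((sStar p R₀ : ℝ) : EReal)) 0
      (fun s => 2*(1 + 3/2*p*(s - 1)) ^ ((1:ℝ)/3) - 1 - R₀/2)
      (fun _ => 1 + R₀/2)
      (fun s => p * (1 + 3/2*p*(s - 1)) ^ (-(2:ℝ)/3))
      (fun _ => 0) := by
  have hc : (0:ℝ) < (R₀ + 2)/2 := by linarith
  have key : ∀ s ∈ IcoE 1 ((sStar p R₀ : ℝ) : EReal),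
      (1 ≤ 1 + 3/2*p*(s - 1)) ∧ (1 + 3/2*p*(s - 1)) ^ ((1:ℝ)/3) < (R₀ + 2)/2 := by
    intro s hs
    obtain ⟨h1s, h2s⟩ := hs
    have h2s' : s < sStar p R₀ := EReal.coe_lt_coe_iff.mp h2s
    have hq1 : 1 ≤ 1 + 3/2*p*(s - 1) := by nlinarith
    refine ⟨hq1, ?_⟩
    have hlt : 1 + 3/2*p*(s - 1) < ((R₀ + 2)/2) ^ 3 := by
      rw [← q_sStar (R₀ := R₀) hp]; nlinarith
    calc (1 + 3/2*p*(s - 1)) ^ ((1:ℝ)/3)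
        < (((R₀ + 2)/2) ^ 3) ^ ((1:ℝ)/3) := by
          apply Real.rpow_lt_rpow (by linarith) hlt (by norm_num)
      _ = (R₀ + 2)/2 := cube_rpow_third hc.le
  refine ⟨?_, ?_, ?_, ?_, ?_, ?_, ?_, ?_⟩
  · intro s hs
    have h1 := (key s hs).1
    have hq : (0:ℝ) < (1 + 3/2*p*(s - 1)) ^ ((1:ℝ)/3) :=
      Real.rpow_pos_of_pos (by linarith) _
    show 0 < (1 + R₀/2) + (2*(1 + 3/2*p*(s - 1)) ^ ((1:ℝ)/3) - 1 - R₀/2)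
    linarith
  · intro s hs
    have h2 := (key s hs).2
    show 0 < (1 + R₀/2) - (2*(1 + 3/2*p*(s - 1)) ^ ((1:ℝ)/3) - 1 - R₀/2)
    linarith
  · intro s hs
    have := (key s hs).1
    positivity
  · intro s hs; norm_num
  · intro s hs
    have hq1 := (key s hs).1
    have hd := ((hasDerivAt_q p s).rpow_const (p := (1:ℝ)/3)
      (Or.inl (by linarith))).const_mul 2
    have hd2 := (hd.sub_const 1).sub_const (R₀/2)
    refine hd2.congr_deriv ?_
    rw [show ((1:ℝ)/3 - 1) = (-(2:ℝ)/3) by norm_num]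
    ring
  · intro s hs
    exact hasDerivAt_const s _
  · intro s hs
    have hq1 := (key s hs).1
    have hq0 : (0:ℝ) < 1 + 3/2*p*(s - 1) := by linarith
    have hd := ((hasDerivAt_q p s).rpow_const (p := -(2:ℝ)/3)
      (Or.inl (by linarith))).const_mul p
    have htuv : tOf (fun s => 2*(1 + 3/2*p*(s - 1)) ^ ((1:ℝ)/3) - 1 - R₀/2)
        (fun _ => 1 + R₀/2) s = ((1 + 3/2*p*(s - 1)) ^ ((1:ℝ)/3)) ^ 2 := by
      unfold tOf; ring
    have hsq : Real.sqrt (tOf (fun s => 2*(1 + 3/2*p*(s - 1)) ^ ((1:ℝ)/3) - 1 - R₀/2)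
        (fun _ => 1 + R₀/2) s) = (1 + 3/2*p*(s - 1)) ^ ((1:ℝ)/3) := by
      rw [htuv]
      exact Real.sqrt_sq (Real.rpow_pos_of_pos hq0 _).le
    have hval : p * (3/2*p * (-(2:ℝ)/3) * (1 + 3/2*p*(s - 1)) ^ (-(2:ℝ)/3 - 1))
        = -(p * (1 + 3/2*p*(s - 1)) ^ (-(2:ℝ)/3)) ^ 2
            / Real.sqrt (tOf (fun s => 2*(1 + 3/2*p*(s - 1)) ^ ((1:ℝ)/3) - 1 - R₀/2)
              (fun _ => 1 + R₀/2) s) := by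
      rw [hsq]
      have h1 : (((1:ℝ) + 3/2*p*(s - 1)) ^ (-(2:ℝ)/3)) ^ 2
          = (1 + 3/2*p*(s - 1)) ^ (-(4:ℝ)/3) := by
        rw [← Real.rpow_natCast ((1 + 3/2*p*(s - 1)) ^ (-(2:ℝ)/3)) 2,
            ← Real.rpow_mul hq0.le]
        norm_num
      have h3 : (-(2:ℝ)/3 - 1) = (-(4:ℝ)/3 - (1:ℝ)/3) := by norm_num
      rw [mul_pow, h1, h3, Real.rpow_sub hq0]
      have hne : ((1:ℝ) + 3/2*p*(s - 1)) ^ ((1:ℝ)/3) ≠ 0 :=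
        ne_of_gt (Real.rpow_pos_of_pos hq0 _)
      field_simp
    rw [hval] at hd
    simpa using hd
  · intro s hs
    have : HasDerivAt (fun _ : ℝ => (0:ℝ)) 0 s := hasDerivAt_const s 0
    convert this using 1
    norm_num

/-- **Ingoing radial null geodesics in FLRW reach the centre in finite parameter time.**
Let `(u,v,pu,pv)` solve the FLRW null geodesic system with `L = 0` on `[1,S)`, maximal
subject to the constraints `r > 0` and `v+u > 0`, with `t(1) = 1`, `pv(1) = 0`,
`p := pu(1) > 0` and `R₀ := r(1) > 0`.  Then `pv ≡ 0` on `[1,S)`,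
`t(s) = (1 + (3/2)p(s−1))^{2/3}` and
`r(s) = R₀ − ∫₁ˢ p·(1 + (3/2)p(s'−1))^{−2/3} ds'` on `[1,S)`; moreover `S < ∞` and
`r(s) → 0` as `s → S`. -/
theorem flrw_ingoing_radial_geodesic (S : EReal) (hS : ((1 : ℝ) : EReal) < S)
    (u v pu pv : ℝ → ℝ) (p R₀ : ℝ)
    (hsys : FLRWGeodesicSystem (IcoE 1 S) 0 u v pu pv)
    (hmax : ∀ S' : EReal, S < S' → ∀ u' v' pu' pv' : ℝ → ℝ,
      Set.EqOn u' u (IcoE 1 S) → Set.EqOn v' v (IcoE 1 S) →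
      Set.EqOn pu' pu (IcoE 1 S) → Set.EqOn pv' pv (IcoE 1 S) →
      ¬ FLRWGeodesicSystem (IcoE 1 S') 0 u' v' pu' pv')
    (ht1 : tOf u v 1 = 1) (hpv1 : pv 1 = 0)
    (hpu1 : pu 1 = p) (hp : 0 < p)
    (hr1 : rOf u v 1 = R₀) (hR₀ : 0 < R₀) :
    (∀ s ∈ IcoE 1 S, pv s = 0) ∧
    (∀ s ∈ IcoE 1 S, tOf u v s = (1 + 3 / 2 * p * (s - 1)) ^ ((2 : ℝ) / 3)) ∧
    (∀ s ∈ IcoE 1 S,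
      rOf u v s = R₀ - ∫ x in (1 : ℝ)..s, p * (1 + 3 / 2 * p * (x - 1)) ^ (-(2 : ℝ) / 3)) ∧
    S < ⊤ ∧
    Tendsto (rOf u v) (𝓝[<] S.toReal) (𝓝 0) := by
  obtain ⟨hvu, hrpos, hpu0, hpv0, hu', hv', hpuD, hpvD⟩ := hsys
  set I := IcoE 1 S with hIdef
  have hIcc : ∀ a ∈ I, ∀ b ∈ I, Set.Icc a b ⊆ I := fun a ha b hb => IcoE_icc_subset ha hb
  have h1I : (1:ℝ) ∈ I := ⟨le_refl 1, hS⟩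
  have htpos : ∀ s ∈ I, 0 < tOf u v s := by
    intro s hs; have := hvu s hs; unfold tOf; positivity
  have hpu' : ∀ s ∈ I, HasDerivAt pu (-(pu s)^2 / Real.sqrt (tOf u v s)) s := by
    intro s hs; simpa using hpuD s hs
  have hpv' : ∀ s ∈ I, HasDerivAt pv (-(pv s)^2 / Real.sqrt (tOf u v s)) s := by
    intro s hs; simpa using hpvD s hs
  -- Step A : pv ≡ 0
  have hpvz : ∀ s ∈ I, pv s = 0 := by
    intro s hs
    have hsub := hIcc 1 h1I s hs
    have hanti : AntitoneOn pv (Set.Icc 1 s) := by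
      apply antitoneOn_of_deriv_nonpos (convex_Icc 1 s)
      · exact fun x hx => (hpv' x (hsub hx)).continuousAt.continuousWithinAt
      · intro x hx
        exact (hpv' x (hsub (interior_subset hx))).differentiableAt.differentiableWithinAt
      · intro x hx
        have hxI : x ∈ I := hsub (interior_subset hx)
        rw [(hpv' x hxI).deriv]
        have h1 : 0 < Real.sqrt (tOf u v x) := Real.sqrt_pos.mpr (htpos x hxI)
        have h2 : (0:ℝ) ≤ (pv x)^2 := sq_nonneg _
        exact div_nonpos_iff.mpr (Or.inr ⟨by linarith, h1.le⟩)
    have hle := hanti (Set.left_mem_Icc.mpr hs.1) (Set.right_mem_Icc.mpr hs.1) hs.1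
    rw [hpv1] at hle
    exact le_antisymm hle (hpv0 s hs)
  -- v is constant
  have hvc : ∀ s ∈ I, v s = v 1 := by
    intro s hs
    exact const_of_deriv_zero hIcc
      (fun x hx => by simpa [hpvz x hx] using hv' x hx) h1I hs hs.1
  -- derivative of t
  have ht' : ∀ s ∈ I, HasDerivAt (tOf u v) ((v s + u s) * pu s / 2) s := by
    intro s hs
    have h := (((hv' s hs).add (hu' s hs)).pow 2).div_const 4
    refine h.congr_deriv ?_
    rw [hpvz s hs]
    simp only [Pi.add_apply]
    ring
  -- conserved quantity: t * pu = p
  have hE : ∀ s ∈ I, tOf u v s * pu s = p := by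
    intro s hs
    have hDE : ∀ x ∈ I, HasDerivAt (fun y => tOf u v y * pu y) 0 x := by
      intro x hx
      have h := (ht' x hx).mul (hpu' x hx)
      refine h.congr_deriv ?_
      have hw : 0 < v x + u x := hvu x hx
      have hsq : Real.sqrt (tOf u v x) = (v x + u x)/2 := by
        rw [show tOf u v x = ((v x + u x)/2)^2 by unfold tOf; ring]
        exact Real.sqrt_sq (by linarith)
      rw [hsq]
      unfold tOf
      field_simp
      ring
    have := const_of_deriv_zero hIcc hDE h1I hs hs.1
    rw [ht1, hpu1] at this
    simpa using this
  -- cube law : ((v+u)/2)^3 = 1 + 3/2 p (s-1)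
  have hvu2 : v 1 + u 1 = 2 := by
    have h0 := hvu 1 h1I
    have : (v 1 + u 1)^2 / 4 = 1 := ht1
    nlinarith
  have hcube : ∀ s ∈ I, ((v s + u s)/2) ^ 3 = 1 + 3/2*p*(s - 1) := by
    intro s hs
    have hDG : ∀ x ∈ I, HasDerivAt
        (fun y => ((v y + u y)/2) ^ 3 - (1 + 3/2*p*(y - 1))) 0 x := by
      intro x hx
      have h1 := (((hv' x hx).add (hu' x hx)).div_const 2).pow 3
      have h := h1.sub (hasDerivAt_q p x)
      refine h.congr_deriv ?_
      have hEx := hE x hx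
      rw [hpvz x hx]
      unfold tOf at hEx
      push_cast
      simp only [Pi.add_apply]
      nlinarith [hEx]
    have h := const_of_deriv_zero hIcc hDG h1I hs hs.1
    rw [hvu2] at h
    norm_num at h
    linarith
  -- positivity of q
  have hq1 : ∀ s ∈ I, (1:ℝ) ≤ 1 + 3/2*p*(s - 1) := by
    intro s hs
    have := hs.1
    nlinarith
  -- (v+u)/2 = q^{1/3}
  have hwq : ∀ s ∈ I, (v s + u s)/2 = (1 + 3/2*p*(s - 1)) ^ ((1:ℝ)/3) := by
    intro s hs
    rw [← hcube s hs, cube_rpow_third (by linarith [hvu s hs])]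
  -- main formula for t
  have htq : ∀ s ∈ I, tOf u v s = (1 + 3/2*p*(s - 1)) ^ ((2:ℝ)/3) := by
    intro s hs
    have h1 : tOf u v s = ((v s + u s)/2)^2 := by unfold tOf; ring
    rw [h1, hwq s hs, rpow_third_sq (by linarith [hq1 s hs])]
  -- formula for pu
  have hpuq : ∀ s ∈ I, pu s = p * (1 + 3/2*p*(s - 1)) ^ (-(2:ℝ)/3) := by
    intro s hs
    have hEx := hE s hs
    have hq0 : (0:ℝ) < 1 + 3/2*p*(s - 1) := by linarith [hq1 s hs]
    have ht := htq s hs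
    have htne : tOf u v s ≠ 0 := ne_of_gt (htpos s hs)
    rw [show (-(2:ℝ)/3) = -((2:ℝ)/3) by norm_num, Real.rpow_neg hq0.le, ← ht]
    field_simp
    linarith [hEx]
  -- closed form for r
  have hrw : ∀ s ∈ I, rOf u v s = R₀ + 2 - (v s + u s) := by
    intro s hs
    have hDR : ∀ x ∈ I, HasDerivAt (fun y => rOf u v y + (v y + u y)) 0 x := by
      intro x hx
      have h := ((hv' x hx).sub (hu' x hx)).add ((hv' x hx).add (hu' x hx))
      have h2 : HasDerivAt (fun y => rOf u v y + (v y + u y))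
          ((pv x - pu x) + (pv x + pu x)) x := h
      rw [hpvz x hx] at h2
      simpa using h2
    have h := const_of_deriv_zero hIcc hDR h1I hs hs.1
    have : rOf u v s + (v s + u s) = R₀ + 2 := by
      rw [h, hr1, hvu2]
    linarith
  -- integral formula for r
  have hrInt : ∀ s ∈ I,
      rOf u v s = R₀ - ∫ x in (1:ℝ)..s, p * (1 + 3/2*p*(x - 1)) ^ (-(2:ℝ)/3) := by
    intro s hs
    have hsub := hIcc 1 h1I s hs
    have huIcc : Set.uIcc (1:ℝ) s = Set.Icc 1 s := Set.uIcc_of_le hs.1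
    have hderiv : ∀ x ∈ Set.uIcc (1:ℝ) s,
        HasDerivAt (rOf u v) (-(p * (1 + 3/2*p*(x - 1)) ^ (-(2:ℝ)/3))) x := by
      intro x hx
      rw [huIcc] at hx
      have hxI := hsub hx
      have h := (hv' x hxI).sub (hu' x hxI)
      rw [hpvz x hxI, hpuq x hxI] at h
      exact h.congr_deriv (by ring)
    have hcont : ContinuousOn (fun x => -(p * (1 + 3/2*p*(x - 1)) ^ (-(2:ℝ)/3)))
        (Set.uIcc (1:ℝ) s) := by
      apply ContinuousOn.neg
      apply ContinuousOn.mul continuousOn_const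
      apply ContinuousOn.rpow_const
      · fun_prop
      · intro x hx
        rw [huIcc] at hx
        left
        have := hq1 x (hsub hx)
        linarith
    have hFTC := intervalIntegral.integral_eq_sub_of_hasDerivAt hderiv
      (hcont.intervalIntegrable)
    rw [intervalIntegral.integral_neg] at hFTC
    rw [hr1] at hFTC
    linarith [hFTC]
  -- the endpoint
  have h1star : 1 < sStar p R₀ := one_lt_sStar hp hR₀
  have hcpos : (0:ℝ) < (R₀ + 2)/2 := by linarith
  -- S ≤ sStar
  have hnotlt : ¬ ((sStar p R₀ : ℝ) : EReal) < S := by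
    intro h
    have hsI : sStar p R₀ ∈ I := ⟨h1star.le, h⟩
    have hr0 := hrpos (sStar p R₀) hsI
    have hrform := hrw (sStar p R₀) hsI
    have hwform := hwq (sStar p R₀) hsI
    rw [q_sStar hp, cube_rpow_third hcpos.le] at hwform
    rw [hrform] at hr0
    rw [show v (sStar p R₀) + u (sStar p R₀) = 2 * ((v (sStar p R₀) + u (sStar p R₀))/2)
      by ring, hwform] at hr0
    linarith
  -- sStar ≤ S
  have hnotgt : ¬ S < ((sStar p R₀ : ℝ) : EReal) := by
    intro hlt
    apply hmax ((sStar p R₀ : ℝ) : EReal) hlt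
      (fun s => 2*(1 + 3/2*p*(s - 1)) ^ ((1:ℝ)/3) - 1 - R₀/2)
      (fun _ => 1 + R₀/2)
      (fun s => p * (1 + 3/2*p*(s - 1)) ^ (-(2:ℝ)/3))
      (fun _ => 0)
    · -- u equality
      intro s hs
      have hv1 : v 1 = 1 + R₀/2 := by
        have : v 1 - u 1 = R₀ := hr1
        linarith
      have hvs : v s = 1 + R₀/2 := by rw [hvc s hs, hv1]
      have hsum : v s + u s = 2 * ((1 + 3/2*p*(s - 1)) ^ ((1:ℝ)/3)) := by
        rw [show v s + u s = 2*((v s + u s)/2) by ring, hwq s hs]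
      show 2*(1 + 3/2*p*(s - 1)) ^ ((1:ℝ)/3) - 1 - R₀/2 = u s
      linarith
    · intro s hs
      show (1:ℝ) + R₀/2 = v s
      have hv1 : v 1 - u 1 = R₀ := hr1
      rw [hvc s hs]
      linarith [hvu2]
    · intro s hs
      exact (hpuq s hs).symm
    · intro s hs
      exact (hpvz s hs).symm
    · exact explicit_system p R₀ hp hR₀
  have hSeq : S = ((sStar p R₀ : ℝ) : EReal) := le_antisymm (not_lt.mp hnotlt) (not_lt.mp hnotgt)
  refine ⟨hpvz, htq, hrInt, ?_, ?_⟩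
  · rw [hSeq]; exact EReal.coe_lt_top _
  · have htoReal : S.toReal = sStar p R₀ := by rw [hSeq]; exact EReal.toReal_coe _
    rw [htoReal]
    have hA : (0:ℝ) < 1 + 3/2*p*(sStar p R₀ - 1) := by
      rw [q_sStar hp]; positivity
    have hgcont : ContinuousAt
        (fun x : ℝ => R₀ + 2 - 2 * (1 + 3/2*p*(x - 1)) ^ ((1:ℝ)/3)) (sStar p R₀) := by
      apply ContinuousAt.sub continuousAt_const
      apply ContinuousAt.mul continuousAt_const
      apply ContinuousAt.rpow_const (by fun_prop)
      left; exact ne_of_gt hA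
    have hgval : R₀ + 2 - 2 * (1 + 3/2*p*(sStar p R₀ - 1)) ^ ((1:ℝ)/3) = 0 := by
      rw [q_sStar hp, cube_rpow_third hcpos.le]
      ring
    have hg : Tendsto (fun x : ℝ => R₀ + 2 - 2 * (1 + 3/2*p*(x - 1)) ^ ((1:ℝ)/3))
        (𝓝[<] (sStar p R₀)) (𝓝 0) := by
      rw [← hgval]
      exact (hgcont.continuousWithinAt).tendsto
    apply hg.congr'
    filter_upwards [Ioo_mem_nhdsLT_of_mem (Set.mem_Ioc.mpr ⟨h1star, le_refl _⟩)] with x hx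
    have hxI : x ∈ I := ⟨hx.1.le, by rw [hSeq]; exact_mod_cast hx.2⟩
    rw [hrw x hxI, show v x + u x = 2 * ((v x + u x)/2) by ring, hwq x hxI]
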